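/- arXiv:1003.2101 — 2 statements merged into one kernel-verified Lean document; each statement's English description precedes it below -/
import Mathlib

section
/- Let α, β, γ be positive reals with α + β + γ = 180. Suppose φ is a real number such that φ/180 is irrational, and suppose each of 2α, 2β, 2γ can be written as kφ + l·180 for some integers k, l. Then there exist integers k, l, m, not all zero, such that kα + lβ + mγ = 0. -/
theorem stmt_0 (α β γ φ : ℝ) (hα : 0 < α) (hβ : 0 < β) (hγ : 0 < γ)
    (hsum : α + β + γ = 180)
    (hirr : Irrational (φ / 180))
    (h2α : ∃ k l : ℤ, 2 * α = k * φ + l * 180)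
    (h2β : ∃ k l : ℤ, 2 * β = k * φ + l * 180)
    (h2γ : ∃ k l : ℤ, 2 * γ = k * φ + l * 180) :
    ∃ k l m : ℤ, ¬(k = 0 ∧ l = 0 ∧ m = 0) ∧ k * α + l * β + m * γ = 0 := by
  obtain ⟨k₁, l₁, h1⟩ := h2α
  obtain ⟨k₂, l₂, h2⟩ := h2β
  set c : ℤ := k₂ * l₁ - k₁ * l₂ with hc
  by_cases h : k₁ = 0 ∧ k₂ = 0
  · obtain ⟨hk1, hk2⟩ := h
    refine ⟨l₂, -l₁, 0, ?_, ?_⟩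
    · rintro ⟨-, hl1, -⟩
      have : l₁ = 0 := by simpa using hl1
      rw [hk1, this] at h1
      push_cast at h1
      linarith
    · rw [hk1] at h1
      rw [hk2] at h2
      push_cast at h1 h2 ⊢
      nlinarith [h1, h2]
  · refine ⟨2 * k₂ - c, -(2 * k₁) - c, -c, ?_, ?_⟩
    · rintro ⟨e1, e2, e3⟩
      have hc0 : c = 0 := by omega
      exact h ⟨by omega, by omega⟩
    · have key : (k₂ : ℝ) * (2 * α) - k₁ * (2 * β) = c * 180 := by
        rw [h1, h2]
        push_cast [hc]
        ring
      have : (c : ℝ) * 180 = c * (α + β + γ) := by rw [hsum]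
      push_cast at key ⊢
      nlinarith [key, this]
end

section
/- Let ABC be a nondegenerate triangle in the plane and let A'B'C' be its image under a reflection across a line. If there exists an orientation-preserving isometry of the plane mapping the triangle ABC onto the triangle A'B'C' (as a set), then ABC is isosceles. -/
open EuclideanGeometry

lemma aux_extreme {ι E : Type*} [Fintype ι] [DecidableEq ι] [NormedAddCommGroup E]
    [NormedSpace ℝ E] (b : AffineBasis ι ℝ E) (i : ι) :
    b i ∈ (convexHull ℝ (Set.range b)).extremePoints ℝ := by
  rw [b.convexHull_eq_nonneg_coord]
  refine ⟨fun j => ?_, ?_⟩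
  · rw [b.coord_apply]
    split <;> norm_num
  · rintro x₁ hx₁ x₂ hx₂ ⟨s, t, hs, ht, hst, hseg⟩
    have key : ∀ x ∈ ({x₁, x₂} : Set E), x = b i := by
      rintro x hx
      have hco : ∀ j, j ≠ i → b.coord j x = 0 := by
        intro j hj
        have h0 : b.coord j (b i) = 0 := by rw [b.coord_apply, if_neg hj]
        have hcomb : s * b.coord j x₁ + t * b.coord j x₂ = 0 := by
          rw [← h0, ← hseg, Convex.combo_affine_apply hst]
          rfl
        have h1 : 0 ≤ s * b.coord j x₁ := mul_nonneg hs.le (hx₁ j)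
        have h2 : 0 ≤ t * b.coord j x₂ := mul_nonneg ht.le (hx₂ j)
        rcases hx with rfl | rfl
        · have : s * b.coord j x = 0 := by linarith
          exact (mul_eq_zero.mp this).resolve_left hs.ne'
        · have : t * b.coord j x = 0 := by linarith
          exact (mul_eq_zero.mp this).resolve_left ht.ne'
      apply b.ext_elem
      intro j
      rcases eq_or_ne j i with rfl | hj
      · have hsum : ∑ k, b.coord k x = 1 := b.sum_coord_apply_eq_one x
        have hsum2 : ∑ k, b.coord k (b j) = 1 := b.sum_coord_apply_eq_one (b j)
        rw [Finset.sum_eq_single j] at hsum hsum2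
        · rw [hsum]; rw [b.coord_apply]; simp
        · intro k _ hk; rw [b.coord_apply]; simp [hk, Ne.symm hk]
        · simp
        · intro k _ hk; exact hco k hk
        · simp
      · rw [hco j hj, b.coord_apply]; simp [hj, Ne.symm hj]
    exact key x₁ (by simp)

lemma aux_image_extreme {E : Type*} [NormedAddCommGroup E] [InnerProductSpace ℝ E]
    (e : E ≃ᵃⁱ[ℝ] E) {s : Set E} {x : E} (hx : x ∈ s.extremePoints ℝ) :
    e x ∈ (e '' s).extremePoints ℝ := by
  obtain ⟨hxs, hext⟩ := hx
  refine ⟨⟨x, hxs, rfl⟩, ?_⟩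
  rintro _ ⟨y₁, hy₁, rfl⟩ _ ⟨y₂, hy₂, rfl⟩ hseg
  have himg : e '' openSegment ℝ y₁ y₂ = openSegment ℝ (e y₁) (e y₂) := by
    have := image_openSegment ℝ (e.toAffineEquiv.toAffineMap) y₁ y₂
    simpa using this
  rw [← himg] at hseg
  obtain ⟨z, hz, hze⟩ := hseg
  have hzx : z = x := e.injective hze
  subst hzx
  have h1 := hext hy₁ hy₂ hz
  rw [h1]

/-- If a nondegenerate triangle `ABC` in the plane is mapped onto its mirror image
`A'B'C'` (the image under a reflection across a line) by an orientation-preserving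
isometry (an isometry whose linear part has determinant `1`), then `ABC` is isosceles. -/
theorem stmt_14 (A B C : EuclideanSpace ℝ (Fin 2))
    (hnd : AffineIndependent ℝ ![A, B, C])
    (L : AffineSubspace ℝ (EuclideanSpace ℝ (Fin 2))) [Nonempty L]
    [L.direction.HasOrthogonalProjection]
    (hL : Module.finrank ℝ L.direction = 1)
    (A' B' C' : EuclideanSpace ℝ (Fin 2))
    (hA' : A' = EuclideanGeometry.reflection L A)
    (hB' : B' = EuclideanGeometry.reflection L B)
    (hC' : C' = EuclideanGeometry.reflection L C)
    (g : EuclideanSpace ℝ (Fin 2) ≃ᵃⁱ[ℝ] EuclideanSpace ℝ (Fin 2))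
    (hg : LinearMap.det (g.linearIsometryEquiv.toLinearEquiv :
      EuclideanSpace ℝ (Fin 2) →ₗ[ℝ] EuclideanSpace ℝ (Fin 2)) = 1)
    (himg : g '' (convexHull ℝ {A, B, C}) = convexHull ℝ {A', B', C'}) :
    dist A B = dist B C ∨ dist B C = dist C A ∨ dist C A = dist A B := by
  classical
  by_contra hcon
  push_neg at hcon
  obtain ⟨h1, h2, h3⟩ := hcon
  -- basic distinctness
  have hinj := hnd.injective
  have hAB : A ≠ B := fun h => by
    have : (0 : Fin 3) = 1 := hinj (show ![A,B,C] 0 = ![A,B,C] 1 by simpa using h)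
    simp at this
  have hBC : B ≠ C := fun h => by
    have : (1 : Fin 3) = 2 := hinj (show ![A,B,C] 1 = ![A,B,C] 2 by simpa using h)
    simp at this
  have hAC : A ≠ C := fun h => by
    have : (0 : Fin 3) = 2 := hinj (show ![A,B,C] 0 = ![A,B,C] 2 by simpa using h)
    simp at this
  -- the affine basis
  have htop : affineSpan ℝ (Set.range ![A, B, C]) = ⊤ := by
    rw [hnd.affineSpan_eq_top_iff_card_eq_finrank_add_one]
    simp [finrank_euclideanSpace_fin]
  let b : AffineBasis (Fin 3) ℝ (EuclideanSpace ℝ (Fin 2)) := ⟨![A, B, C], hnd, htop⟩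
  have hbrange : Set.range (b : Fin 3 → (EuclideanSpace ℝ (Fin 2))) = ({A, B, C} : Set (EuclideanSpace ℝ (Fin 2))) := by
    show Set.range ![A, B, C] = _
    simp [Fin.range_fin_succ, Fin.tail]
  -- extreme points of the triangle
  have hextr : (convexHull ℝ ({A, B, C} : Set (EuclideanSpace ℝ (Fin 2)))).extremePoints ℝ = {A, B, C} := by
    apply Set.Subset.antisymm (extremePoints_convexHull_subset)
    rw [← hbrange]
    rintro x ⟨i, rfl⟩
    exact aux_extreme b i
  -- the composed map f
  set R := EuclideanGeometry.reflection L with hR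
  let f : (EuclideanSpace ℝ (Fin 2)) ≃ᵃⁱ[ℝ] (EuclideanSpace ℝ (Fin 2)) := g.trans R.symm
  have hfapp : ∀ x, f x = R.symm (g x) := fun x => rfl
  -- f preserves the triangle
  have hRimg : R '' (convexHull ℝ ({A, B, C} : Set (EuclideanSpace ℝ (Fin 2)))) = convexHull ℝ {A', B', C'} := by
    have := AffineMap.image_convexHull (R.toAffineEquiv.toAffineMap) ({A, B, C} : Set (EuclideanSpace ℝ (Fin 2)))
    rw [show ⇑R.toAffineEquiv.toAffineMap = ⇑R from rfl] at this
    rw [this]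
    congr 1
    rw [Set.image_insert_eq, Set.image_insert_eq, Set.image_singleton, hA', hB', hC']
  have hfimg : f '' (convexHull ℝ ({A, B, C} : Set (EuclideanSpace ℝ (Fin 2)))) = convexHull ℝ ({A, B, C} : Set (EuclideanSpace ℝ (Fin 2))) := by
    have : f '' (convexHull ℝ ({A, B, C} : Set (EuclideanSpace ℝ (Fin 2))))
        = R.symm '' (g '' (convexHull ℝ ({A, B, C} : Set (EuclideanSpace ℝ (Fin 2))))) := by
      rw [Set.image_image]; rfl
    rw [this, himg, ← hRimg, Set.image_image]
    simp
  -- f maps vertices to vertices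
  have hvert : ∀ x ∈ ({A, B, C} : Set (EuclideanSpace ℝ (Fin 2))), f x ∈ ({A, B, C} : Set (EuclideanSpace ℝ (Fin 2))) := by
    intro x hx
    have hxe : x ∈ (convexHull ℝ ({A, B, C} : Set (EuclideanSpace ℝ (Fin 2)))).extremePoints ℝ := by
      rw [hextr]; exact hx
    have := aux_image_extreme f hxe
    rw [hfimg, hextr] at this
    exact this
  have hfA := hvert A (by simp)
  have hfB := hvert B (by simp)
  have hfC := hvert C (by simp)
  have hdAB : dist (f A) (f B) = dist A B := f.dist_map A B
  have hdBC : dist (f B) (f C) = dist B C := f.dist_map B C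
  have hdAC : dist (f A) (f C) = dist A C := f.dist_map A C
  have hfinj : Function.Injective f := f.injective
  -- f fixes each vertex
  have hfix : f A = A ∧ f B = B ∧ f C = C := by
    simp only [Set.mem_insert_iff, Set.mem_singleton_iff] at hfA hfB hfC
    rcases hfA with hA1 | hA1 | hA1 <;> rcases hfB with hB1 | hB1 | hB1 <;>
      rcases hfC with hC1 | hC1 | hC1 <;>
      first
      | (exact ⟨hA1, hB1, hC1⟩)
      | (exact absurd (hfinj (hA1.trans hB1.symm)) hAB)
      | (exact absurd (hfinj (hB1.trans hC1.symm)) hBC)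
      | (exact absurd (hfinj (hA1.trans hC1.symm)) hAC)
      | (exfalso
         rw [hA1, hB1] at hdAB
         rw [hB1, hC1] at hdBC
         rw [hA1, hC1] at hdAC
         simp only [dist_comm C A, dist_comm B A, dist_comm C B] at h1 h2 h3 hdAB hdBC hdAC
         first
         | exact h1 hdAB | exact h1 hdAB.symm | exact h2 hdAB | exact h2 hdAB.symm
         | exact h3 hdAB | exact h3 hdAB.symm
         | exact h1 hdBC | exact h1 hdBC.symm | exact h2 hdBC | exact h2 hdBC.symm
         | exact h3 hdBC | exact h3 hdBC.symm
         | exact h1 hdAC | exact h1 hdAC.symm | exact h2 hdAC | exact h2 hdAC.symm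
         | exact h3 hdAC | exact h3 hdAC.symm)
  obtain ⟨hfA', hfB', hfC'⟩ := hfix
  -- the linear part of f is the identity
  have hfixall : ∀ i : Fin 3, f (![A, B, C] i) = ![A, B, C] i := by
    intro i
    fin_cases i <;> simpa using by assumption
  have hli := (affineIndependent_iff_linearIndependent_vsub ℝ ![A, B, C] 0).mp hnd
  haveI : Nonempty {x : Fin 3 // x ≠ 0} := ⟨⟨1, by decide⟩⟩
  have hcard : Fintype.card {x : Fin 3 // x ≠ 0} = Module.finrank ℝ (EuclideanSpace ℝ (Fin 2)) := by
    simp [finrank_euclideanSpace_fin]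
  let bb := basisOfLinearIndependentOfCardEqFinrank hli hcard
  have hbb : ∀ i, bb i = ![A, B, C] (i : {x : Fin 3 // x ≠ 0}).val -ᵥ ![A, B, C] 0 := by
    intro i
    show (⇑(basisOfLinearIndependentOfCardEqFinrank hli hcard)) i = _
    rw [coe_basisOfLinearIndependentOfCardEqFinrank]
  have hflin : (f.linearIsometryEquiv.toLinearEquiv : (EuclideanSpace ℝ (Fin 2)) →ₗ[ℝ] (EuclideanSpace ℝ (Fin 2))) = LinearMap.id := by
    apply bb.ext
    intro i
    rw [LinearMap.id_apply]
    have : (f.linearIsometryEquiv.toLinearEquiv : (EuclideanSpace ℝ (Fin 2)) →ₗ[ℝ] (EuclideanSpace ℝ (Fin 2))) (bb i)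
        = f.linearIsometryEquiv (bb i) := rfl
    rw [this, hbb i, f.map_vsub, hfixall, hfixall]
  have hdetf : LinearMap.det (f.linearIsometryEquiv.toLinearEquiv : (EuclideanSpace ℝ (Fin 2)) →ₗ[ℝ] (EuclideanSpace ℝ (Fin 2))) = 1 := by
    rw [hflin, LinearMap.det_id]
  -- but the determinant of f is -1
  have hcomp : (f.linearIsometryEquiv.toLinearEquiv : (EuclideanSpace ℝ (Fin 2)) →ₗ[ℝ] (EuclideanSpace ℝ (Fin 2)))
      = ((Submodule.reflection L.direction).toLinearEquiv : (EuclideanSpace ℝ (Fin 2)) →ₗ[ℝ] (EuclideanSpace ℝ (Fin 2))) ∘ₗ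
        (g.linearIsometryEquiv.toLinearEquiv : (EuclideanSpace ℝ (Fin 2)) →ₗ[ℝ] (EuclideanSpace ℝ (Fin 2))) := by
    refine LinearMap.ext fun v => ?_
    have hRlin : R.linearIsometryEquiv = Submodule.reflection L.direction := by
      rw [hR]
      exact LinearIsometryEquiv.ext fun w => rfl
    have e1 : f.linearIsometryEquiv v = f v -ᵥ f 0 := by
      have := f.map_vsub (v + 0) 0
      simpa using this
    have e2 : g.linearIsometryEquiv v = g v -ᵥ g 0 := by
      have := g.map_vsub (v + 0) 0
      simpa using this
    have e3 : R.symm (g v) -ᵥ R.symm (g 0)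
        = R.symm.linearIsometryEquiv (g v -ᵥ g 0) := (R.symm.map_vsub _ _).symm
    show f.linearIsometryEquiv v = Submodule.reflection L.direction (g.linearIsometryEquiv v)
    rw [e1, e2, hfapp, hfapp, e3]
    congr 1
  have horth : Module.finrank ℝ (L.direction)ᗮ = 1 := by
    have := Submodule.finrank_add_finrank_orthogonal (K := L.direction) (𝕜 := ℝ)
    rw [hL, finrank_euclideanSpace_fin] at this
    omega
  have hdetR : LinearMap.det
      (((Submodule.reflection L.direction).toLinearEquiv : (EuclideanSpace ℝ (Fin 2)) →ₗ[ℝ] (EuclideanSpace ℝ (Fin 2)))) = -1 := by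
    have := Submodule.det_reflection (K := L.direction) (𝕜 := ℝ)
    rw [horth] at this
    simpa using this
  rw [hcomp, LinearMap.det_comp, hdetR, hg] at hdetf
  norm_num at hdetf
end
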